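/- Let V be a complex normed space, B ≥ 0, and g : ℂ → V a function with ‖g(zₙ)‖ ≤ B for all n ≥ 1. Then for every s ∈ ℂ with Re s > 1/2 and every a ∈ ℝ, the series Σ_{n=1}^∞ e^{2πina} · (2/(nλ(1−z)+2))^{2s} · g(zₙ) converges absolutely in V. (Well-definedness of the parabolic part of the fast transfer operator on bounded holomorphic functions for Re s > 1/2.) -/

import Mathlib

/-!
STATEMENT 9: Absolute convergence of the (twisted) parabolic part of the fast
transfer operator applied to a function `g` bounded along the orbit
`zₙ = ((2−nλ)z+nλ)/(nλ(1−z)+2)`, for `Re s > 1/2`.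
-/

open Complex

theorem parabolic_part_summable_of_bounded
    {V : Type} [NormedAddCommGroup V] [NormedSpace ℂ V]
    (lam : ℝ) (hlam : 0 < lam) (z : ℂ) (hz : z.re < 1)
    (B : ℝ) (hB : 0 ≤ B) (g : ℂ → V)
    (hg : ∀ n : ℕ, 1 ≤ n →
      ‖g (((2 - (n : ℂ) * (lam : ℂ)) * z + (n : ℂ) * (lam : ℂ)) /
            ((n : ℂ) * (lam : ℂ) * (1 - z) + 2))‖ ≤ B)
    (s : ℂ) (hs : 1 / 2 < s.re) (a : ℝ) :
    Summable (fun n : ℕ =>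
      ‖(Complex.exp (2 * Real.pi * Complex.I * ((n : ℂ) + 1) * (a : ℂ)) *
            (2 / (((n : ℂ) + 1) * (lam : ℂ) * (1 - z) + 2)) ^ (2 * s)) •
          g (((2 - ((n : ℂ) + 1) * (lam : ℂ)) * z + ((n : ℂ) + 1) * (lam : ℂ)) /
              (((n : ℂ) + 1) * (lam : ℂ) * (1 - z) + 2))‖) := by
  set p : ℝ := 2 * s.re with hp_def
  have hp : 1 < p := by simp only [hp_def]; linarith
  have hp0 : 0 ≤ p := by linarith
  set c : ℝ := lam * (1 - z.re) with hc_def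
  have hc : 0 < c := mul_pos hlam (by linarith)
  set E : ℝ := Real.exp (Real.pi * |(2 * s).im|) with hE_def
  have hE0 : 0 ≤ E := Real.exp_nonneg _
  set K : ℝ := (2 / c) ^ p * E * B with hK_def
  -- comparison series
  have hsum : Summable (fun n : ℕ => K * ((n : ℝ) + 1) ^ (-p)) := by
    apply Summable.mul_left
    have h1 : Summable (fun n : ℕ => (n : ℝ) ^ (-p)) :=
      Real.summable_nat_rpow.mpr (by linarith)
    have h2 := h1.comp_injective Nat.succ_injective
    refine h2.congr fun n => ?_
    simp [Function.comp, Nat.succ_eq_add_one]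
  refine Summable.of_nonneg_of_le (fun n => norm_nonneg _) (fun n => ?_) hsum
  set D : ℂ := ((n : ℂ) + 1) * (lam : ℂ) * (1 - z) + 2 with hD_def
  have hDre : ((n : ℝ) + 1) * c + 2 = D.re := by
    simp [hD_def, hc_def]; ring
  have hDre_pos : 0 < D.re := by
    rw [← hDre]; positivity
  have hD0 : D ≠ 0 := by
    intro h; rw [h] at hDre_pos; simp at hDre_pos
  have habsD : ((n : ℝ) + 1) * c ≤ ‖D‖ := by
    calc ((n : ℝ) + 1) * c ≤ D.re := by rw [← hDre]; linarith
    _ ≤ ‖D‖ := Complex.re_le_norm D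
  have hw0 : (0:ℝ) < ((n : ℝ) + 1) * c := by positivity
  have habsw : ‖2 / D‖ ≤ (2 / c) * ((n : ℝ) + 1)⁻¹ := by
    rw [norm_div]
    simp only [Complex.norm_two]
    rw [div_le_iff₀ (lt_of_lt_of_le hw0 habsD)]
    have : (2 / c) * ((n : ℝ) + 1)⁻¹ * (((n : ℝ) + 1) * c) = 2 := by
      field_simp
    calc (2:ℝ) = (2 / c) * ((n : ℝ) + 1)⁻¹ * (((n : ℝ) + 1) * c) := this.symm
    _ ≤ (2 / c) * ((n : ℝ) + 1)⁻¹ * ‖D‖ := by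
        apply mul_le_mul_of_nonneg_left habsD; positivity
  -- norm of exponential is 1
  have hexp : ‖Complex.exp (2 * Real.pi * Complex.I * ((n : ℂ) + 1) * (a : ℂ))‖ = 1 := by
    rw [Complex.norm_exp]
    have : (2 * (Real.pi:ℂ) * Complex.I * ((n : ℂ) + 1) * (a : ℂ)).re = 0 := by
      simp [Complex.mul_re, Complex.mul_im]
    rw [this, Real.exp_zero]
  -- cpow bound
  have hcpow : ‖(2 / D) ^ (2 * s)‖ ≤ (‖2 / D‖) ^ p * E := by
    have h1 := Complex.norm_cpow_le (2 / D) (2 * s)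
    have h2 : ‖2 / D‖ ^ (2 * s).re / Real.exp ((2 / D).arg * (2 * s).im)
        ≤ ‖2 / D‖ ^ p * E := by
      rw [div_le_iff₀ (Real.exp_pos _)]
      have hre : (2 * s).re = p := by simp [hp_def]
      rw [hre, mul_assoc]
      apply le_mul_of_one_le_right (Real.rpow_nonneg (norm_nonneg _) p)
      rw [← Real.exp_add, ← Real.exp_zero]
      apply Real.exp_le_exp.mpr
      have harg : |(2 / D).arg| ≤ Real.pi := Complex.abs_arg_le_pi _
      have : -(Real.pi * |(2 * s).im|) ≤ (2 / D).arg * (2 * s).im := by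
        calc -(Real.pi * |(2 * s).im|) ≤ -|(2 / D).arg * (2 * s).im| := by
              rw [neg_le_neg_iff, abs_mul]
              apply mul_le_mul_of_nonneg_right harg (abs_nonneg _)
        _ ≤ (2 / D).arg * (2 * s).im := neg_abs_le _
      linarith
    exact h1.trans h2
  have hwp : (‖2 / D‖) ^ p ≤ (2 / c) ^ p * ((n : ℝ) + 1) ^ (-p) := by
    calc (‖2 / D‖) ^ p ≤ ((2 / c) * ((n : ℝ) + 1)⁻¹) ^ p :=
          Real.rpow_le_rpow (norm_nonneg _) habsw hp0
    _ = (2 / c) ^ p * ((n : ℝ) + 1) ^ (-p) := by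
        rw [Real.mul_rpow (by positivity) (by positivity),
          Real.inv_rpow (by positivity), ← Real.rpow_neg (by positivity)]
  have hgB : ‖g (((2 - ((n : ℂ) + 1) * (lam : ℂ)) * z + ((n : ℂ) + 1) * (lam : ℂ)) /
      (((n : ℂ) + 1) * (lam : ℂ) * (1 - z) + 2))‖ ≤ B := by
    have := hg (n + 1) (Nat.le_add_left 1 n)
    push_cast at this
    convert this using 4 <;> push_cast <;> ring
  rw [norm_smul, norm_mul]
  calc ‖Complex.exp (2 * Real.pi * Complex.I * ((n : ℂ) + 1) * (a : ℂ))‖ *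
        ‖(2 / D) ^ (2 * s)‖ *
        ‖g (((2 - ((n : ℂ) + 1) * (lam : ℂ)) * z + ((n : ℂ) + 1) * (lam : ℂ)) /
            (((n : ℂ) + 1) * (lam : ℂ) * (1 - z) + 2))‖
      ≤ 1 * ((‖2 / D‖) ^ p * E) * B := by
        apply mul_le_mul _ hgB (norm_nonneg _) (by positivity)
        apply mul_le_mul _ hcpow (norm_nonneg _) (by norm_num)
        rw [hexp]
    _ ≤ 1 * ((2 / c) ^ p * ((n : ℝ) + 1) ^ (-p) * E) * B := by
        apply mul_le_mul_of_nonneg_right _ hB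
        apply mul_le_mul_of_nonneg_left _ (by norm_num)
        exact mul_le_mul_of_nonneg_right hwp hE0
    _ = K * ((n : ℝ) + 1) ^ (-p) := by rw [hK_def]; ring
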